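/- Let p be a prime with p ≡ 13 or 17 (mod 20) such that ν_p(F_{α(p)}) = 1. Then for every integer n ≥ 0, ν_p(F_{p(n+1)}) = ν_p(F_{n+1}) + ν_p(F_{pn + (p−1)/2}). -/

import Mathlib

open Polynomial

/-- The restricted period (rank of apparition) of the Fibonacci sequence modulo `p`:
the least positive `n` such that `p ∣ F n`. -/
noncomputable def fibAlpha (p : ℕ) : ℕ := sInf {n | 0 < n ∧ p ∣ Nat.fib n}

lemma fib_mul_expansion {R : Type*} [CommRing R] (m' : ℕ)
    (ha : ((Nat.fib (m' + 1) : R)) ^ 3 = 0) (t : ℕ) :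
    ((Nat.fib ((m' + 1) * (t + 1)) : R) * (Nat.fib m' : R) =
      (t + 1 : ℕ) * (Nat.fib (m' + 1) : R) * (Nat.fib m' : R) ^ (t + 1) +
        ((t + 1).choose 2 : R) * (Nat.fib (m' + 1) : R) ^ 2 * (Nat.fib m' : R) ^ t) ∧
    ((Nat.fib ((m' + 1) * (t + 1) + 1) : R) * (Nat.fib m' : R) =
      (Nat.fib m' : R) ^ (t + 2) + (t + 1 : ℕ) * (Nat.fib (m' + 1) : R) * (Nat.fib m' : R) ^ (t + 1) +
        2 * ((t + 1).choose 2 : R) * (Nat.fib (m' + 1) : R) ^ 2 * (Nat.fib m' : R) ^ t) := by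
  set a : R := (Nat.fib (m' + 1) : R) with hadef
  set c : R := (Nat.fib m' : R) with hcdef
  induction t with
  | zero =>
      constructor
      · simp [mul_one, hadef]
      · have e : (m' + 1) * (0 + 1) + 1 = m' + 1 + 1 := by ring
        have h2 : (Nat.fib (m' + 1 + 1) : R) = c + a := by
          rw [Nat.fib_add_two]; push_cast; ring
        rw [e, h2]
        simp [Nat.choose_eq_zero_of_lt]
        ring
  | succ t ih =>
      obtain ⟨ih1, ih2⟩ := ih
      have e1 : (m' + 1) * (t + 1 + 1) = (m' + 1) * (t + 1) + m' + 1 := by ring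
      have e2 : (m' + 1) * (t + 1 + 1) + 1 = ((m' + 1) * (t + 1) + 1) + m' + 1 := by ring
      have h1 : (Nat.fib ((m' + 1) * (t + 1 + 1)) : R) =
          (Nat.fib ((m' + 1) * (t + 1)) : R) * c + (Nat.fib ((m' + 1) * (t + 1) + 1) : R) * a := by
        rw [e1, Nat.fib_add]
        push_cast
        ring
      have h2 : (Nat.fib ((m' + 1) * (t + 1 + 1) + 1) : R) =
          (Nat.fib ((m' + 1) * (t + 1) + 1) : R) * c +
            ((Nat.fib ((m' + 1) * (t + 1)) : R) + (Nat.fib ((m' + 1) * (t + 1) + 1) : R)) * a := by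
        rw [e2, Nat.fib_add]
        have h3 : Nat.fib ((m' + 1) * (t + 1) + 1 + 1) =
            Nat.fib ((m' + 1) * (t + 1)) + Nat.fib ((m' + 1) * (t + 1) + 1) := by
          rw [Nat.fib_add_two]
        push_cast [h3]
        ring
      have hC : ((t + 1 + 1).choose 2 : R) = ((t + 1).choose 2 : R) + ((t + 1 : ℕ) : R) := by
        have : (t + 2).choose 2 = (t + 1).choose 1 + (t + 1).choose 2 := by
          rw [Nat.choose_succ_succ]
        push_cast [this, Nat.choose_one_right]
        ring
      push_cast at ih1 ih2 hC ⊢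
      constructor
      · rw [h1]
        push_cast [hC]
        linear_combination (c : R) * ih1 + a * ih2 +
          (2 * ((t + 1).choose 2 : R) * c ^ t) * ha
      · rw [h2]
        push_cast [hC]
        linear_combination (c : R) * ih2 + a * ih1 + a * ih2 +
          (3 * ((t + 1).choose 2 : R) * c ^ t) * ha

lemma euler_five (p : ℕ) (hp : p.Prime) (h : p % 20 = 13 ∨ p % 20 = 17) :
    (5 : ZMod p) ^ (p / 2) = -1 := by
  have hns3 : ¬ IsSquare (3 : ZMod 5) := by decide
  have hns2 : ¬ IsSquare (2 : ZMod 5) := by decide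
  haveI : Fact p.Prime := ⟨hp⟩
  haveI : Fact (Nat.Prime 5) := ⟨by norm_num⟩
  have hp4 : p % 4 = 1 := by omega
  have hp5 : p % 5 = 3 ∨ p % 5 = 2 := by omega
  have hleg : legendreSym p 5 = -1 := by
    have h1 : legendreSym p 5 = legendreSym 5 p :=
      (legendreSym.quadratic_reciprocity_one_mod_four hp4 (by norm_num)).symm
    have h2 : legendreSym 5 (p : ℤ) = legendreSym 5 ((p : ℤ) % 5) := legendreSym.mod 5 (p : ℤ)
    have h3 : ((p : ℤ) % 5) = ((p % 5 : ℕ) : ℤ) := by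
      omega
    rw [h1, h2, h3]
    rcases hp5 with h5 | h5 <;> rw [h5]
    · show legendreSym 5 ((3 : ℕ) : ℤ) = -1
      rw [legendreSym.eq_neg_one_iff']
      simpa using hns3
    · show legendreSym 5 ((2 : ℕ) : ℤ) = -1
      rw [legendreSym.eq_neg_one_iff']
      simpa using hns2
  have := legendreSym.eq_pow p 5
  rw [hleg] at this
  push_cast at this
  rw [← this]

lemma dvd_fib_half (p : ℕ) (hp : p.Prime) (h : p % 20 = 13 ∨ p % 20 = 17) :
    p ∣ Nat.fib ((p + 1) / 2) := by
  haveI : Fact p.Prime := ⟨hp⟩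
  have hp2 : 2 < p := by omega
  have hodd : p % 2 = 1 := by omega
  have heuler := euler_five p hp h
  -- 5 is nonzero mod p
  have h5 : (5 : ZMod p) ≠ 0 := by
    have : ((5 : ℕ) : ZMod p) ≠ 0 := by
      rw [Ne, ZMod.natCast_eq_zero_iff]
      intro hdvd
      have := (Nat.prime_dvd_prime_iff_eq hp (by norm_num)).1 hdvd
      omega
    simpa using this
  -- 5 is not a square mod p
  have hnsq : ∀ s : ZMod p, (5 : ZMod p) ≠ s ^ 2 := by
    intro s hs
    have hs0 : s ≠ 0 := by rintro rfl; simp at hs; exact h5 hs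
    have h1 : (5 : ZMod p) ^ (p / 2) = 1 := by
      calc (5 : ZMod p) ^ (p / 2) = (s ^ 2) ^ (p / 2) := by rw [hs]
        _ = s ^ (p - 1) := by rw [← pow_mul]; congr 1; omega
        _ = 1 := ZMod.pow_card_sub_one_eq_one hs0
    rw [heuler] at h1
    have : ((2 : ℕ) : ZMod p) = 0 := by push_cast; linear_combination -h1
    rw [ZMod.natCast_eq_zero_iff] at this
    have := Nat.le_of_dvd (by norm_num) this
    omega
  -- the quadratic X² - X - 1 over ZMod p
  set f : (ZMod p)[X] := X ^ 2 - X - 1 with hfdef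
  have hmonic : f.Monic := by
    unfold f
    monicity!
  have hdeg : f.natDegree = 2 := by
    unfold f
    compute_degree!
  have hirr : Irreducible f := by
    rw [hmonic.irreducible_iff_roots_eq_zero_of_degree_le_three (by omega) (by omega)]
    rw [Multiset.eq_zero_iff_forall_notMem]
    intro x hx
    rw [mem_roots (hmonic.ne_zero)] at hx
    have hev : eval x f = x ^ 2 - x - 1 := by simp [hfdef]
    have : (1 : ZMod p) * (x * x) + (-1) * x + (-1) = 0 := by
      rw [IsRoot, hev] at hx
      linear_combination hx
    exact quadratic_ne_zero_of_discrim_ne_sq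
      (by intro s; rw [discrim]; intro hd; exact hnsq s (by linear_combination hd)) x this
  haveI : Fact (Irreducible f) := ⟨hirr⟩
  set K := AdjoinRoot f with hK
  haveI : CharP K p := charP_of_injective_algebraMap (algebraMap (ZMod p) K).injective p
  set φ : K := AdjoinRoot.root f with hφdef
  have hφ : φ ^ 2 = φ + 1 := by
    have := AdjoinRoot.eval₂_root f
    rw [hfdef] at this
    simp only [eval₂_sub, eval₂_pow, eval₂_X, eval₂_one] at this
    linear_combination this
  set ψ : K := 1 - φ with hψdef
  have hψ : ψ ^ 2 = ψ + 1 := by rw [hψdef]; linear_combination hφ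
  -- Binet-type formula
  have hfib : ∀ n : ℕ, (2 * φ - 1) * (Nat.fib n : K) = φ ^ n - ψ ^ n := by
    have key : ∀ n : ℕ, (2 * φ - 1) * (Nat.fib n : K) = φ ^ n - ψ ^ n ∧
        (2 * φ - 1) * (Nat.fib (n + 1) : K) = φ ^ (n + 1) - ψ ^ (n + 1) := by
      intro n
      induction n with
      | zero => constructor <;> simp [hψdef] <;> ring
      | succ n ih =>
          obtain ⟨ih1, ih2⟩ := ih
          refine ⟨ih2, ?_⟩
          have hrec : (Nat.fib (n + 2) : K) = (Nat.fib n : K) + (Nat.fib (n + 1) : K) := by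
            rw [Nat.fib_add_two]; push_cast; ring
          rw [hrec]
          have e1 : φ ^ (n + 2) = φ ^ n * φ ^ 2 := by ring
          have e2 : ψ ^ (n + 2) = ψ ^ n * ψ ^ 2 := by ring
          rw [e1, e2, hφ, hψ]
          linear_combination ih1 + ih2
    exact fun n => (key n).1
  -- s = 2φ - 1 is a square root of 5, nonzero
  have hs5 : (2 * φ - 1) ^ 2 = 5 := by linear_combination 4 * hφ
  have h5K : (5 : K) ≠ 0 := by
    intro h0
    have : ((5 : ℕ) : K) = 0 := by push_cast; exact h0
    rw [CharP.cast_eq_zero_iff K p] at this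
    have := (Nat.prime_dvd_prime_iff_eq hp (by norm_num)).1 this
    omega
  have hsne : (2 * φ - 1) ≠ 0 := by
    intro h0
    apply h5K
    rw [← hs5, h0]
    ring
  -- heuler in K
  have heulerK : (5 : K) ^ (p / 2) = -1 := by
    have := congrArg (algebraMap (ZMod p) K) heuler
    rw [map_pow, map_neg, map_one, map_ofNat] at this
    exact this
  -- Frobenius: φ^p is a root of the quadratic
  have htwoK : (2 : K) ^ p = 2 := by
    have : ((1 : K) + 1) ^ p = 1 ^ p + 1 ^ p := add_pow_char (1 : K) 1 p
    norm_num at this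
    convert this using 2 <;> norm_num
  have hfr : (φ ^ p) ^ 2 = φ ^ p + 1 := by
    have h1 : (φ ^ 2) ^ p = (φ + 1) ^ p := by rw [hφ]
    rw [add_pow_char _ _ p] at h1
    have : (φ ^ p) ^ 2 = (φ ^ 2) ^ p := by ring
    rw [this, h1]
    norm_num
  -- the quadratic factors, so φ^p = φ or φ^p = ψ
  have hfactor : (φ ^ p - φ) * (φ ^ p - ψ) = 0 := by
    rw [hψdef]
    linear_combination hfr - hφ
  rcases mul_eq_zero.1 hfactor with hcase | hcase
  · -- φ^p = φ : contradiction with 5 being a nonresidue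
    exfalso
    have hφp : φ ^ p = φ := by linear_combination hcase
    have hsp : (2 * φ - 1) ^ p = 2 * φ - 1 := by
      have h1 : (2 * φ - 1) ^ p = (2 * φ) ^ p - 1 ^ p := sub_pow_char (2 * φ) (1 : K)
      rw [mul_pow, htwoK, hφp, one_pow] at h1
      linear_combination h1
    have h1 : (5 : K) ^ (p / 2) = 1 := by
      have e1 : ((2 * φ - 1) ^ 2) ^ (p / 2) = (2 * φ - 1) ^ (p - 1) := by
        rw [← pow_mul]
        congr 1
        omega
      have e2 : (2 * φ - 1) ^ (p - 1) = 1 := by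
        apply mul_right_cancel₀ hsne
        rw [one_mul, ← pow_succ, show p - 1 + 1 = p by omega, hsp]
      rw [← hs5, e1, e2]
    rw [heulerK] at h1
    apply h5K
    have h2 : ((2 : ℕ) : K) = 0 := by push_cast; linear_combination -h1
    rw [CharP.cast_eq_zero_iff K p] at h2
    have := Nat.le_of_dvd (by norm_num) h2
    omega
  · -- φ^p = ψ : then p ∣ fib ((p+1)/2)
    have hφp : φ ^ p = ψ := by linear_combination hcase
    have hψp : ψ ^ p = φ := by
      have h1 : ψ ^ p = 1 ^ p - φ ^ p := by rw [hψdef]; exact sub_pow_char (1 : K) φ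
      rw [one_pow, hφp, hψdef] at h1
      rw [h1]
      ring
    set n := (p + 1) / 2 with hn
    have h2n : 2 * n = p + 1 := by omega
    have hφψ : φ * ψ = -1 := by rw [hψdef]; linear_combination -hφ
    have hx2 : (φ ^ n) ^ 2 = -1 := by
      have : (φ ^ n) ^ 2 = φ ^ (2 * n) := by ring
      rw [this, h2n, pow_succ, hφp]
      linear_combination hφψ
    have hy2 : (ψ ^ n) ^ 2 = -1 := by
      have : (ψ ^ n) ^ 2 = ψ ^ (2 * n) := by ring
      rw [this, h2n, pow_succ, hψp]
      linear_combination hφψ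
    have hnodd : Odd n := by
      have hp4 : p % 4 = 1 := by omega
      rw [Nat.odd_iff]
      omega
    have hxy : (φ ^ n) * (ψ ^ n) = -1 := by
      rw [← mul_pow, hφψ, hnodd.neg_one_pow]
    have hxne : φ ^ n ≠ 0 := by
      intro h0
      rw [h0] at hx2
      norm_num at hx2
    have hxy' : φ ^ n = ψ ^ n := by
      have h1 : (φ ^ n) * (φ ^ n - ψ ^ n) = 0 := by
        rw [mul_sub, hxy]
        nth_rewrite 1 [← hx2]
        ring
      rcases mul_eq_zero.1 h1 with h2 | h2
      · exact absurd h2 hxne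
      · linear_combination h2
    have hfibn : (2 * φ - 1) * (Nat.fib n : K) = 0 := by
      rw [hfib n, hxy']
      ring
    rcases mul_eq_zero.1 hfibn with h2 | h2
    · exact absurd h2 hsne
    · rw [show ((Nat.fib n : K)) = ((Nat.fib n : ℕ) : K) from rfl,
        CharP.cast_eq_zero_iff K p] at h2
      exact h2

lemma pv_eq {p x v : ℕ} (hp : p.Prime) (hx : x ≠ 0) (h1 : p ^ v ∣ x)
    (h2 : ¬ p ^ (v + 1) ∣ x) : padicValNat p x = v := by
  have hf := Nat.factorization_def x hp
  have a : v ≤ x.factorization p := (Nat.Prime.pow_dvd_iff_le_factorization hp hx).1 h1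
  have b : ¬ (v + 1 ≤ x.factorization p) := fun hle =>
    h2 ((Nat.Prime.pow_dvd_iff_le_factorization hp hx).2 hle)
  omega

lemma pv_dvd_facts {p x v : ℕ} (hp : p.Prime) (hx : x ≠ 0) (hv : padicValNat p x = v) :
    p ^ v ∣ x ∧ ¬ p ^ (v + 1) ∣ x := by
  constructor
  · rw [← hv]; exact pow_padicValNat_dvd
  · intro hdvd
    have := (Nat.Prime.pow_dvd_iff_le_factorization hp hx).1 hdvd
    rw [Nat.factorization_def x hp, hv] at this
    omega

/-- p doesn't divide fib (m-1) when p divides fib m -/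
lemma not_dvd_fib_pred {p m' : ℕ} (hp : p.Prime) (hdvd : p ∣ Nat.fib (m' + 1)) :
    ¬ p ∣ Nat.fib m' := by
  intro hc
  have hcop := Nat.fib_coprime_fib_succ m'
  have := Nat.dvd_gcd hc hdvd
  rw [Nat.Coprime] at hcop
  rw [hcop] at this
  have := Nat.dvd_one.1 this
  have := hp.one_lt
  omega

/-- The multiply-by-p step -/
lemma fib_val_step {p : ℕ} (hp : p.Prime) (h2 : 2 < p) (m k : ℕ) (hm : 0 < m) (hk : 1 ≤ k)
    (hval : padicValNat p (Nat.fib m) = k) : padicValNat p (Nat.fib (m * p)) = k + 1 := by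
  obtain ⟨m', rfl⟩ : ∃ m', m = m' + 1 := ⟨m - 1, by omega⟩
  set a := Nat.fib (m' + 1) with hadef
  set c := Nat.fib m' with hcdef
  have ha0 : a ≠ 0 := Nat.fib_pos.2 (by omega) |>.ne'
  obtain ⟨hpk, hpk1⟩ := pv_dvd_facts hp ha0 hval
  obtain ⟨w, hw⟩ := hpk
  have hpw : ¬ p ∣ w := by
    intro hc
    apply hpk1
    obtain ⟨w', rfl⟩ := hc
    rw [hw, pow_succ]
    exact ⟨w', by ring⟩
  have hpa : p ∣ a := dvd_trans (dvd_pow_self p (by omega : k ≠ 0)) ⟨w, hw⟩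
  have hpc : ¬ p ∣ c := not_dvd_fib_pred hp hpa
  -- instantiate in ZMod (p^(k+2))
  have hppos : 0 < p := by omega
  have hane : (p:ℕ) ^ (k + 2) ≠ 0 := by positivity
  have hcube : ((a : ZMod (p ^ (k + 2)))) ^ 3 = 0 := by
    have : ((a ^ 3 : ℕ) : ZMod (p ^ (k + 2))) = 0 := by
      rw [ZMod.natCast_eq_zero_iff]
      rw [hw]
      calc p ^ (k + 2) ∣ p ^ (3 * k) := pow_dvd_pow p (by omega)
        _ ∣ (p ^ k * w) ^ 3 := ⟨w ^ 3, by ring⟩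
    push_cast at this
    exact this
  have E := (fib_mul_expansion (R := ZMod (p ^ (k + 2))) m' hcube (p - 1)).1
  rw [show p - 1 + 1 = p from by omega] at E
  -- convert to ModEq over ℕ
  have Emod : Nat.fib ((m' + 1) * p) * c ≡
      p * a * c ^ p + p.choose 2 * a ^ 2 * c ^ (p - 1) [MOD p ^ (k + 2)] := by
    rw [← ZMod.natCast_eq_natCast_iff]
    push_cast
    rw [E]
  -- second term vanishes
  have hN2 : p ^ (k + 2) ∣ p.choose 2 * a ^ 2 * c ^ (p - 1) := by
    have hch : p ∣ p.choose 2 := hp.dvd_choose_self (by norm_num) h2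
    obtain ⟨e, he⟩ := hch
    rw [he, hw]
    calc p ^ (k + 2) ∣ p ^ (1 + 2 * k) := pow_dvd_pow p (by omega)
      _ ∣ p * e * (p ^ k * w) ^ 2 * c ^ (p - 1) := ⟨e * w ^ 2 * c ^ (p - 1), by ring⟩
  have Emod2 : Nat.fib ((m' + 1) * p) * c ≡ p * a * c ^ p [MOD p ^ (k + 2)] := by
    calc Nat.fib ((m' + 1) * p) * c
        ≡ p * a * c ^ p + p.choose 2 * a ^ 2 * c ^ (p - 1) [MOD p ^ (k + 2)] := Emod
      _ ≡ p * a * c ^ p + 0 [MOD p ^ (k + 2)] :=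
          Nat.ModEq.add_left _ ((Nat.modEq_zero_iff_dvd).2 hN2)
      _ = p * a * c ^ p := by ring
  -- valuation of N₁ = p * a * c^p is exactly k+1
  have hN1 : p * a * c ^ p = p ^ (k + 1) * (w * c ^ p) := by rw [hw]; ring
  have hN1d : p ^ (k + 1) ∣ p * a * c ^ p := ⟨w * c ^ p, hN1⟩
  have hN1nd : ¬ p ^ (k + 2) ∣ p * a * c ^ p := by
    rw [hN1]
    intro hdvd
    have : p ∣ w * c ^ p := by
      have hne : p ^ (k + 1) ≠ 0 := by positivity
      rcases hdvd with ⟨e, he⟩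
      refine ⟨e, ?_⟩
      have : p ^ (k + 1) * (w * c ^ p) = p ^ (k + 1) * (p * e) := by
        rw [he]; ring
      exact Nat.eq_of_mul_eq_mul_left (by positivity) this
    rcases hp.dvd_mul.1 this with hc | hc
    · exact hpw hc
    · exact hpc (hp.dvd_of_dvd_pow hc)
  -- transfer both to fib((m'+1)*p) * c
  have hd1 : p ^ (k + 1) ∣ Nat.fib ((m' + 1) * p) * c := by
    have h1 : Nat.fib ((m' + 1) * p) * c ≡ p * a * c ^ p [MOD p ^ (k + 1)] :=
      Nat.ModEq.of_dvd (pow_dvd_pow p (by omega : k + 1 ≤ k + 2)) Emod2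
    have h2 : p * a * c ^ p ≡ 0 [MOD p ^ (k + 1)] := (Nat.modEq_zero_iff_dvd).2 hN1d
    exact (Nat.modEq_zero_iff_dvd).1 (h1.trans h2)
  have hd2 : ¬ p ^ (k + 2) ∣ Nat.fib ((m' + 1) * p) * c := by
    intro hdvd
    apply hN1nd
    have h1 : Nat.fib ((m' + 1) * p) * c ≡ 0 [MOD p ^ (k + 2)] := (Nat.modEq_zero_iff_dvd).2 hdvd
    exact (Nat.modEq_zero_iff_dvd).1 (Emod2.symm.trans h1)
  -- remove the factor c
  have hcop : Nat.Coprime (p ^ (k + 1)) c := Nat.Coprime.pow_left _ ((hp.coprime_iff_not_dvd).2 hpc)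
  have hfd : p ^ (k + 1) ∣ Nat.fib ((m' + 1) * p) := (Nat.Coprime.dvd_of_dvd_mul_right hcop) hd1
  have hfnd : ¬ p ^ (k + 2) ∣ Nat.fib ((m' + 1) * p) := by
    intro hdvd
    exact hd2 (Dvd.dvd.mul_right hdvd c)
  exact pv_eq hp (Nat.fib_pos.2 (by positivity) |>.ne') hfd (by rw [show k + 1 + 1 = k + 2 from rfl]; exact hfnd)

/-- Base case: exact valuation 1 for fib (α * u) with p ∤ u -/
lemma fib_val_base {p α : ℕ} (hp : p.Prime) (hα : 0 < α) (hpa : p ∣ Nat.fib α)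
    (hpa2 : ¬ p ^ 2 ∣ Nat.fib α) (u : ℕ) (hu0 : 0 < u) (hpu : ¬ p ∣ u) :
    padicValNat p (Nat.fib (α * u)) = 1 := by
  obtain ⟨m', rfl⟩ : ∃ m', α = m' + 1 := ⟨α - 1, by omega⟩
  obtain ⟨t, rfl⟩ : ∃ t, u = t + 1 := ⟨u - 1, by omega⟩
  set a := Nat.fib (m' + 1) with hadef
  set c := Nat.fib m' with hcdef
  obtain ⟨w, hw⟩ := hpa
  have hpw : ¬ p ∣ w := by
    intro hc
    apply hpa2
    obtain ⟨w', rfl⟩ := hc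
    exact ⟨w', by rw [hw]; ring⟩
  have hpc : ¬ p ∣ c := not_dvd_fib_pred hp ⟨w, hw⟩
  have hcube : ((a : ZMod (p ^ 2))) ^ 3 = 0 := by
    have : ((a ^ 3 : ℕ) : ZMod (p ^ 2)) = 0 := by
      rw [ZMod.natCast_eq_zero_iff, hw]
      exact ⟨p * w ^ 3, by ring⟩
    push_cast at this
    exact this
  have E := (fib_mul_expansion (R := ZMod (p ^ 2)) m' hcube t).1
  have Emod : Nat.fib ((m' + 1) * (t + 1)) * c ≡
      (t + 1) * a * c ^ (t + 1) + (t + 1).choose 2 * a ^ 2 * c ^ t [MOD p ^ 2] := by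
    rw [← ZMod.natCast_eq_natCast_iff]
    push_cast
    rw [E]
    push_cast
    ring
  have hN2 : p ^ 2 ∣ (t + 1).choose 2 * a ^ 2 * c ^ t := by
    rw [hw]
    exact ⟨(t + 1).choose 2 * w ^ 2 * c ^ t, by ring⟩
  have Emod2 : Nat.fib ((m' + 1) * (t + 1)) * c ≡ (t + 1) * a * c ^ (t + 1) [MOD p ^ 2] := by
    calc Nat.fib ((m' + 1) * (t + 1)) * c
        ≡ (t + 1) * a * c ^ (t + 1) + (t + 1).choose 2 * a ^ 2 * c ^ t [MOD p ^ 2] := Emod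
      _ ≡ (t + 1) * a * c ^ (t + 1) + 0 [MOD p ^ 2] :=
          Nat.ModEq.add_left _ ((Nat.modEq_zero_iff_dvd).2 hN2)
      _ = (t + 1) * a * c ^ (t + 1) := by ring
  have hN1nd : ¬ p ^ 2 ∣ (t + 1) * a * c ^ (t + 1) := by
    rw [hw]
    intro hdvd
    have : p ∣ (t + 1) * (w * c ^ (t + 1)) := by
      rcases hdvd with ⟨e, he⟩
      refine ⟨e, ?_⟩
      apply Nat.eq_of_mul_eq_mul_left (show 0 < p from hp.pos)
      calc p * ((t + 1) * (w * c ^ (t + 1))) = (t + 1) * (p * w) * c ^ (t + 1) := by ring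
        _ = p ^ 2 * e := he
        _ = p * (p * e) := by ring
    rcases hp.dvd_mul.1 this with hc | hc
    · exact hpu hc
    · rcases hp.dvd_mul.1 hc with hc' | hc'
      · exact hpw hc'
      · exact hpc (hp.dvd_of_dvd_pow hc')
  have hd2 : ¬ p ^ 2 ∣ Nat.fib ((m' + 1) * (t + 1)) * c := by
    intro hdvd
    exact hN1nd ((Nat.modEq_zero_iff_dvd).1
      (Emod2.symm.trans ((Nat.modEq_zero_iff_dvd).2 hdvd)))
  have hfd : p ∣ Nat.fib ((m' + 1) * (t + 1)) :=
    dvd_trans ⟨w, hw⟩ (Nat.fib_dvd _ _ ⟨t + 1, rfl⟩)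
  have hfnd : ¬ p ^ 2 ∣ Nat.fib ((m' + 1) * (t + 1)) := by
    intro hdvd
    exact hd2 (Dvd.dvd.mul_right hdvd c)
  exact pv_eq hp (Nat.fib_pos.2 (by positivity) |>.ne') (by simpa using hfd) hfnd

/-- Main LTE-style valuation formula -/
lemma fib_val_mul {p α : ℕ} (hp : p.Prime) (h2 : 2 < p) (hα : 0 < α) (hpa : p ∣ Nat.fib α)
    (hpa2 : ¬ p ^ 2 ∣ Nat.fib α) (s : ℕ) (hs : 0 < s) :
    padicValNat p (Nat.fib (α * s)) = 1 + padicValNat p s := by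
  have haux : ∀ j u, 0 < u → ¬ p ∣ u → padicValNat p (Nat.fib (α * (p ^ j * u))) = 1 + j := by
    intro j
    induction j with
    | zero =>
        intro u hu0 hpu
        simpa using fib_val_base hp hα hpa hpa2 u hu0 hpu
    | succ j ih =>
        intro u hu0 hpu
        have e : α * (p ^ (j + 1) * u) = (α * (p ^ j * u)) * p := by ring
        rw [e, fib_val_step hp h2 _ (1 + j) (by positivity) (by omega) (ih u hu0 hpu)]
        omega
  set j := padicValNat p s with hj
  have hs' : s ≠ 0 := hs.ne'
  have hdecomp : p ^ j * (s / p ^ j) = s := by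
    rw [hj, ← Nat.factorization_def s hp]
    exact Nat.ordProj_mul_ordCompl_eq_self s p
  have hu0 : 0 < s / p ^ j := by
    rw [hj, ← Nat.factorization_def s hp]
    exact Nat.ordCompl_pos p hs'
  have hpu : ¬ p ∣ s / p ^ j := by
    rw [hj, ← Nat.factorization_def s hp]
    exact Nat.not_dvd_ordCompl hp hs'
  have := haux j (s / p ^ j) hu0 hpu
  rw [hdecomp] at this
  exact this

section FibAlpha

variable {p : ℕ}

lemma fibAlpha_mem (hex : ∃ n, 0 < n ∧ p ∣ Nat.fib n) :
    0 < fibAlpha p ∧ p ∣ Nat.fib (fibAlpha p) :=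
  Nat.sInf_mem hex

lemma dvd_fib_iff_alpha_dvd (hex : ∃ n, 0 < n ∧ p ∣ Nat.fib n) (k : ℕ) :
    p ∣ Nat.fib k ↔ fibAlpha p ∣ k := by
  obtain ⟨hα0, hαd⟩ := fibAlpha_mem hex
  constructor
  · intro hk
    rcases Nat.eq_zero_or_pos k with rfl | hk0
    · exact dvd_zero _
    · set g := Nat.gcd k (fibAlpha p) with hg
      have hgpos : 0 < g := Nat.gcd_pos_of_pos_left _ hk0
      have hpg : p ∣ Nat.fib g := by
        rw [hg, Nat.fib_gcd]
        exact Nat.dvd_gcd hk hαd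
      have hle : fibAlpha p ≤ g := Nat.sInf_le ⟨hgpos, hpg⟩
      have hgle : g ∣ fibAlpha p := Nat.gcd_dvd_right _ _
      have : g = fibAlpha p := le_antisymm (Nat.le_of_dvd hα0 hgle) hle
      rw [← this]
      exact Nat.gcd_dvd_left _ _
  · intro hk
    exact dvd_trans hαd (Nat.fib_dvd _ _ hk)

end FibAlpha

theorem nup_fib_p_mul_succ_13_17 (p : ℕ) (hp : p.Prime)
    (h : p % 20 = 13 ∨ p % 20 = 17)
    (hwall : padicValNat p (Nat.fib (fibAlpha p)) = 1) (n : ℕ) :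
    padicValNat p (Nat.fib (p * (n + 1))) =
      padicValNat p (Nat.fib (n + 1)) +
        padicValNat p (Nat.fib (p * n + (p - 1) / 2)) := by
  haveI : Fact p.Prime := ⟨hp⟩
  have hp13 : 13 ≤ p := by omega
  have hodd : p % 2 = 1 := by omega
  have hhalf := dvd_fib_half p hp h
  have hhalfpos : 0 < (p + 1) / 2 := by omega
  have hex : ∃ n, 0 < n ∧ p ∣ Nat.fib n := ⟨(p + 1) / 2, hhalfpos, hhalf⟩
  set α := fibAlpha p with hαdef
  obtain ⟨hα0, hαd⟩ := fibAlpha_mem hex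
  -- α ∣ (p+1)/2
  have hαhalf : α ∣ (p + 1) / 2 := (dvd_fib_iff_alpha_dvd hex _).1 hhalf
  have hαle : α ≤ (p + 1) / 2 := Nat.le_of_dvd hhalfpos hαhalf
  have hαltp : α < p := by omega
  have hpα : ¬ p ∣ α := fun hc => by have := Nat.le_of_dvd hα0 hc; omega
  have hcop : Nat.Coprime α p := (Nat.coprime_comm.1 ((hp.coprime_iff_not_dvd).2 hpα))
  have hfibα_ne : Nat.fib α ≠ 0 := (Nat.fib_pos.2 hα0).ne'
  have hα2 : ¬ p ^ 2 ∣ Nat.fib α := by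
    intro hdvd
    have := (Nat.Prime.pow_dvd_iff_le_factorization hp hfibα_ne).1 hdvd
    rw [Nat.factorization_def _ hp, hwall] at this
    omega
  set q := (p - 1) / 2 with hqdef
  have hq : q + (p + 1) / 2 = p := by omega
  have hkey : p * n + q + (p + 1) / 2 = p * (n + 1) := by
    rw [Nat.mul_add, mul_one]
    omega
  have hqpos : 0 < q := by omega
  have hqltp : q < p := by omega
  by_cases hαdvd : α ∣ n + 1
  · obtain ⟨t, ht⟩ := hαdvd
    have ht0 : 0 < t := by
      rcases Nat.eq_zero_or_pos t with rfl | h'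
      · omega
      · exact h'
    -- LHS
    have e1 : p * (n + 1) = α * (p * t) := by rw [ht]; ring
    have lhs : padicValNat p (Nat.fib (p * (n + 1))) = 2 + padicValNat p t := by
      rw [e1, fib_val_mul hp (by omega) hα0 hαd hα2 (p * t) (by positivity)]
      rw [padicValNat.mul (by omega) (by omega), padicValNat.self (by omega)]
      omega
    -- first term
    have t1 : padicValNat p (Nat.fib (n + 1)) = 1 + padicValNat p t := by
      rw [ht, fib_val_mul hp (by omega) hα0 hαd hα2 t ht0]
    -- second term
    have hdvd2 : α ∣ p * n + q := by
      have h1 : α ∣ p * (n + 1) := Dvd.dvd.mul_left ⟨t, ht⟩ p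
      have h2 : α ∣ (p + 1) / 2 := hαhalf
      have e : p * n + q = p * (n + 1) - (p + 1) / 2 := by omega
      rw [e]
      exact Nat.dvd_sub h1 h2
    obtain ⟨s, hs⟩ := hdvd2
    have hs0 : 0 < s := by
      rcases Nat.eq_zero_or_pos s with rfl | h'
      · omega
      · exact h'
    have hps : ¬ p ∣ s := by
      intro hc
      have : p ∣ p * n + q := by
        rw [hs]
        exact Dvd.dvd.mul_left hc α
      have : p ∣ q := (Nat.dvd_add_right ⟨n, rfl⟩).1 this
      have := Nat.le_of_dvd hqpos this
      omega
    have t2 : padicValNat p (Nat.fib (p * n + q)) = 1 := by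
      rw [hs, fib_val_mul hp (by omega) hα0 hαd hα2 s hs0,
        padicValNat.eq_zero_of_not_dvd hps]
    rw [lhs, t1, t2]
    omega
  · have n1 : padicValNat p (Nat.fib (p * (n + 1))) = 0 := by
      apply padicValNat.eq_zero_of_not_dvd
      intro hc
      have := (dvd_fib_iff_alpha_dvd hex _).1 hc
      exact hαdvd (hcop.dvd_of_dvd_mul_left this)
    have n2 : padicValNat p (Nat.fib (n + 1)) = 0 := by
      apply padicValNat.eq_zero_of_not_dvd
      intro hc
      exact hαdvd ((dvd_fib_iff_alpha_dvd hex _).1 hc)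
    have n3 : padicValNat p (Nat.fib (p * n + q)) = 0 := by
      apply padicValNat.eq_zero_of_not_dvd
      intro hc
      have h1 : α ∣ p * n + q := (dvd_fib_iff_alpha_dvd hex _).1 hc
      have h2 : α ∣ p * (n + 1) := by
        rw [← hkey]
        exact Nat.dvd_add h1 hαhalf
      exact hαdvd (hcop.dvd_of_dvd_mul_left h2)
    rw [n1, n2, n3]
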